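/- Let G be an infinite group and let I be a left translation invariant ideal in P_G which contains all finite subsets of G and satisfies I ≠ F_G. Then there exists a left translation invariant ideal J in P_G such that F_G ⊊ J ⊊ I and J is properly contained in the ideal Sp_G of sparse subsets of G. -/

import Mathlib

open Pointwise

/-- A family `I` of subsets of `G` is an ideal in `P_G`: `G ∉ I`, and `I` is closed
under finite unions and under taking subsets. -/
def IsIdealFam {G : Type*} (I : Set (Set G)) : Prop :=
  (Set.univ : Set G) ∉ I ∧
  (∀ A ∈ I, ∀ B ∈ I, A ∪ B ∈ I) ∧
  (∀ A ∈ I, ∀ C : Set G, C ⊆ A → C ∈ I)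

/-- A family `I` of subsets of a group `G` is left translation invariant if
`gA ∈ I` for all `g ∈ G`, `A ∈ I`. -/
def IsLeftInvFam {G : Type*} [Group G] (I : Set (Set G)) : Prop :=
  ∀ g : G, ∀ A ∈ I, g • A ∈ I

/-- A subset `A` of a group `G` is sparse if every infinite `X ⊆ G` has a finite
subset `F` such that `⋂ g ∈ F, g • A` is finite. -/
def IsSparseSub {G : Type*} [Group G] (A : Set G) : Prop :=
  ∀ X : Set G, X.Infinite →
    ∃ F : Finset G, (F : Set G) ⊆ X ∧ (⋂ g ∈ F, (g : G) • A).Finite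

/-- If `I` is a left translation invariant ideal in `P_G` containing all finite
sets with `I ≠ F_G`, then there is a left translation invariant ideal `J` with
`F_G ⊊ J ⊊ I` and `J` properly contained in the ideal of sparse subsets. -/
theorem exists_leftInv_ideal_between
    {G : Type*} [Group G] [Infinite G] (I : Set (Set G))
    (hI : IsIdealFam I) (hInv : IsLeftInvFam I)
    (hFin : {A : Set G | A.Finite} ⊆ I) (hne : I ≠ {A : Set G | A.Finite}) :
    ∃ J : Set (Set G), IsIdealFam J ∧ IsLeftInvFam J ∧
      {A : Set G | A.Finite} ⊂ J ∧ J ⊂ I ∧ J ⊂ {A : Set G | IsSparseSub A} := by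
  classical
  -- Step 0: there is an infinite set in I
  obtain ⟨A, hAI, hAinf⟩ : ∃ A ∈ I, A.Infinite := by
    by_contra hcon
    push_neg at hcon
    refine hne (Set.Subset.antisymm (fun A hA => ?_) hFin)
    simpa [Set.not_infinite] using hcon A hA
  -- Step 1: construct a "thin" sequence in A
  have hpick : ∀ s : Finset G, ∃ x, x ∈ A ∧ x ∉ s := by
    intro s
    obtain ⟨x, hx⟩ := (hAinf.diff s.finite_toSet).nonempty
    exact ⟨x, hx.1, hx.2⟩
  choose pick hpickA hpickS using hpick
  set T : Finset G → Finset G :=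
    fun s => ((s ×ˢ s) ×ˢ s).image fun p => p.1.1 * p.1.2⁻¹ * p.2 with hT
  have hTmem : ∀ s : Finset G, ∀ x ∈ s, ∀ y ∈ s, ∀ z ∈ s, x * y⁻¹ * z ∈ T s := by
    intro s x hx y hy z hz
    exact Finset.mem_image.mpr ⟨((x, y), z), by simp [Finset.mem_product, hx, hy, hz], rfl⟩
  set F : ℕ → Finset G := fun n => Nat.rec ∅ (fun _ s => insert (pick (T s)) s) n with hF
  set b : ℕ → G := fun n => pick (T (F n)) with hb
  have hFsucc : ∀ n, F (n + 1) = insert (b n) (F n) := fun n => rfl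
  have hFmono : Monotone F :=
    monotone_nat_of_le_succ (fun n => by rw [hFsucc]; exact Finset.subset_insert _ _)
  have hbA : ∀ n, b n ∈ A := fun n => hpickA _
  have hbT : ∀ n, b n ∉ T (F n) := fun n => hpickS _
  have hsubT : ∀ s : Finset G, s ⊆ T s := by
    intro s x hx
    have := hTmem s x hx x hx x hx
    simpa using this
  have hbF : ∀ {m n : ℕ}, m < n → b m ∈ F n := by
    intro m n h
    exact hFmono h (by rw [hFsucc]; exact Finset.mem_insert_self _ _)
  have hbnotF : ∀ n, b n ∉ F n := fun n h => hbT n (hsubT _ h)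
  have hbinj : Function.Injective b := by
    intro m n h
    rcases lt_trichotomy m n with hmn | hmn | hmn
    · exact absurd (h ▸ hbF hmn) (hbnotF n)
    · exact hmn
    · exact absurd (h ▸ hbF hmn) (hbnotF m)
  have havoid : ∀ n i j k, i < n → j < n → k < n → b n ≠ b i * (b j)⁻¹ * b k := by
    intro n i j k hi hj hk heq
    exact hbT n (heq ▸ hTmem (F n) _ (hbF hi) _ (hbF hj) _ (hbF hk))
  set B : Set G := Set.range b with hBdef
  -- Step 2: the range B is a thin set
  have hthin : ∀ g : G, g ≠ 1 → ((g • B) ∩ B).Finite := by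
    intro g hg
    by_contra hfin
    have hinf : ((g • B) ∩ B).Infinite := hfin
    have hIY : (b ⁻¹' ((g • B) ∩ B)).Infinite := hinf.preimage (fun y hy => hy.2)
    set IY := b ⁻¹' ((g • B) ∩ B) with hIYdef
    have hex : ∀ i : ℕ, ∃ m : ℕ, i ∈ IY → b i = g * b m := by
      intro i
      by_cases hi : i ∈ IY
      · have hgB : b i ∈ g • B := hi.1
        obtain ⟨z, hz, hzz⟩ := hgB
        obtain ⟨m, rfl⟩ := hz
        exact ⟨m, fun _ => by rw [← hzz]; simp [smul_eq_mul]⟩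
      · exact ⟨0, fun h => absurd h hi⟩
    choose jf hjf using hex
    have hjinj : ∀ i ∈ IY, ∀ i' ∈ IY, jf i = jf i' → i = i' := by
      intro i hi i' hi' h
      apply hbinj
      rw [hjf i hi, hjf i' hi', h]
    obtain ⟨i0, hi0⟩ := hIY.nonempty
    set N := max i0 (jf i0) with hN
    have hSfin : {i | i ∈ IY ∧ jf i ≤ N}.Finite := by
      have himg : (jf '' {i | i ∈ IY ∧ jf i ≤ N}).Finite :=
        (Set.finite_Iic N).subset (by rintro _ ⟨i, ⟨-, hle⟩, rfl⟩; exact hle)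
      exact Set.Finite.of_finite_image himg (fun i hi i' hi' h => hjinj i hi.1 i' hi'.1 h)
    obtain ⟨i1, hi1IY, hi1not⟩ :=
      (hIY.diff ((Set.finite_Iic N).union hSfin)).nonempty
    have hi1N : N < i1 := by
      by_contra hle
      exact hi1not (Or.inl (not_lt.mp hle))
    have hj1N : N < jf i1 := by
      by_contra hle
      exact hi1not (Or.inr ⟨hi1IY, not_lt.mp hle⟩)
    have h0 : b i0 = g * b (jf i0) := hjf i0 hi0
    have h1 : b i1 = g * b (jf i1) := hjf i1 hi1IY
    have hgeq : g = b i0 * (b (jf i0))⁻¹ := by rw [h0]; group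
    have hne1 : i1 ≠ jf i1 := by
      intro h
      apply hg
      rw [← h] at h1
      exact right_eq_mul.mp h1
    rcases lt_or_gt_of_ne hne1 with hlt | hgt
    · -- i1 < jf i1
      refine havoid (jf i1) (jf i0) i0 i1
        (lt_of_le_of_lt (le_max_right _ _) hj1N)
        (lt_of_le_of_lt (le_max_left _ _) hj1N) hlt ?_
      rw [h1, hgeq]
      group
    · -- jf i1 < i1
      refine havoid i1 i0 (jf i0) (jf i1)
        (lt_of_le_of_lt (le_max_left _ _) hi1N)
        (lt_of_le_of_lt (le_max_right _ _) hi1N) hgt ?_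
      rw [h1, hgeq]
  -- Step 3: split B into two infinite pieces
  set B1 : Set G := b '' {n | Even n} with hB1def
  set B2 : Set G := b '' {n | Odd n} with hB2def
  have hB1B : B1 ⊆ B := Set.image_subset_range _ _
  have hB2B : B2 ⊆ B := Set.image_subset_range _ _
  have hB1A : B1 ⊆ A := by rintro x ⟨n, -, rfl⟩; exact hbA n
  have hB2A : B2 ⊆ A := by rintro x ⟨n, -, rfl⟩; exact hbA n
  have hdisj : B1 ∩ B2 = ∅ := by
    rw [Set.eq_empty_iff_forall_notMem]
    rintro x ⟨⟨m, hm, hmx⟩, ⟨n, hn, hnx⟩⟩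
    have : m = n := hbinj (hmx.trans hnx.symm)
    rw [this] at hm
    exact (Nat.not_odd_iff_even.mpr hm) hn
  have hevens : {n : ℕ | Even n}.Infinite :=
    Set.infinite_of_injective_forall_mem (f := fun n : ℕ => 2 * n)
      (fun a b h => by dsimp at h; omega) (fun n => ⟨n, by ring⟩)
  have hodds : {n : ℕ | Odd n}.Infinite :=
    Set.infinite_of_injective_forall_mem (f := fun n : ℕ => 2 * n + 1)
      (fun a b h => by dsimp at h; omega) (fun n => ⟨n, rfl⟩)
  have hB1inf : B1.Infinite := hevens.image (hbinj.injOn)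
  have hB2inf : B2.Infinite := hodds.image (hbinj.injOn)
  have hmix : ∀ g : G, (B2 ∩ g • B1).Finite := by
    intro g
    by_cases hg : g = 1
    · subst hg
      rw [one_smul, Set.inter_comm, hdisj]
      exact Set.finite_empty
    · refine (hthin g hg).subset ?_
      rintro x ⟨hx2, hx1⟩
      exact ⟨Set.smul_set_mono hB1B hx1, hB2B hx2⟩
  set U : Finset G → Set G := fun Fs => ⋃ g ∈ Fs, g • B1 with hU
  have hUmono : ∀ F1 F2 : Finset G, F1 ⊆ F2 → U F1 ⊆ U F2 := by
    intro F1 F2 h x hx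
    simp only [hU, Set.mem_iUnion] at hx ⊢
    obtain ⟨g, hg, hxg⟩ := hx
    exact ⟨g, h hg, hxg⟩
  have hUI : ∀ Fs : Finset G, U Fs ∈ I := by
    intro Fs
    induction Fs using Finset.induction_on with
    | empty => exact hFin (by simp [hU])
    | @insert a s ha ih =>
      have heq : U (insert a s) = a • B1 ∪ U s := by
        simp [hU, Set.biUnion_insert]
      rw [heq]
      exact hI.2.1 _ (hInv a B1 (hI.2.2 A hAI B1 hB1A)) _ ih
  have hB2U : ∀ Fs : Finset G, (B2 \ U Fs).Infinite := by
    intro Fs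
    have hfin : (B2 ∩ U Fs).Finite := by
      have heq : B2 ∩ U Fs = ⋃ g ∈ Fs, B2 ∩ g • B1 := by
        simp [hU, Set.inter_iUnion]
      rw [heq]
      exact Set.Finite.biUnion Fs.finite_toSet (fun g _ => hmix g)
    have := hB2inf.diff hfin
    rwa [Set.diff_self_inter] at this
  -- Step 4: the ideal J
  set J : Set (Set G) := {C : Set G | ∃ Fs : Finset G, (C \ U Fs).Finite} with hJ
  have hB2J : B2 ∉ J := by
    rintro ⟨Fs, hfin⟩
    exact hB2U Fs hfin
  have hJideal : IsIdealFam J := by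
    refine ⟨?_, ?_, ?_⟩
    · rintro ⟨Fs, hfin⟩
      exact hB2U Fs (hfin.subset (Set.diff_subset_diff_left (Set.subset_univ _)))
    · rintro C1 ⟨F1, h1⟩ C2 ⟨F2, h2⟩
      refine ⟨F1 ∪ F2, (h1.union h2).subset ?_⟩
      rintro x ⟨hx, hxn⟩
      rcases hx with h | h
      · exact Or.inl ⟨h, fun hc => hxn (hUmono F1 (F1 ∪ F2) Finset.subset_union_left hc)⟩
      · exact Or.inr ⟨h, fun hc => hxn (hUmono F2 (F1 ∪ F2) Finset.subset_union_right hc)⟩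
    · rintro C1 ⟨Fs, h1⟩ C2 hsub
      exact ⟨Fs, h1.subset (Set.diff_subset_diff_left hsub)⟩
  have hJinv : IsLeftInvFam J := by
    rintro g C ⟨Fs, hfin⟩
    refine ⟨Fs.image (g * ·), ?_⟩
    have hUsub : g • U Fs ⊆ U (Fs.image (g * ·)) := by
      rintro x ⟨y, hy, rfl⟩
      simp only [hU, Set.mem_iUnion] at hy ⊢
      obtain ⟨h, hh, hyh⟩ := hy
      refine ⟨g * h, Finset.mem_image_of_mem _ hh, ?_⟩
      rw [mul_smul]
      exact Set.smul_mem_smul_set hyh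
    refine Set.Finite.subset (hfin.smul_set (a := g)) ?_
    rintro x ⟨hxC, hxU⟩
    have hx : x ∈ g • C \ g • U Fs := ⟨hxC, fun hc => hxU (hUsub hc)⟩
    rwa [← Set.smul_set_sdiff] at hx
  have hFJsub : {A : Set G | A.Finite} ⊆ J := by
    intro C hC
    exact ⟨∅, by simpa [hU] using hC⟩
  have hB1J : B1 ∈ J := ⟨{1}, by simp [hU]⟩
  have hFJ : {A : Set G | A.Finite} ⊂ J :=
    (Set.ssubset_iff_of_subset hFJsub).mpr ⟨B1, hB1J, fun h => hB1inf h⟩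
  have hJIsub : J ⊆ I := by
    rintro C ⟨Fs, hfin⟩
    have hCsub : C ⊆ (C \ U Fs) ∪ U Fs := by
      intro x hx
      by_cases h : x ∈ U Fs
      · exact Or.inr h
      · exact Or.inl ⟨hx, h⟩
    exact hI.2.2 _ (hI.2.1 _ (hFin hfin) _ (hUI Fs)) C hCsub
  have hJI : J ⊂ I :=
    (Set.ssubset_iff_of_subset hJIsub).mpr ⟨B2, hI.2.2 A hAI B2 hB2A, hB2J⟩
  -- Step 5: every member of J is sparse
  have hB2sparse : IsSparseSub B2 := by
    intro X hX
    obtain ⟨x, hxX⟩ := hX.nonempty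
    obtain ⟨y, hyX, hyx⟩ := (hX.diff (Set.finite_singleton x)).nonempty
    have hxy : x ≠ y := fun h => hyx (by simp [h])
    refine ⟨{x, y}, ?_, ?_⟩
    · intro z hz
      simp only [Finset.coe_insert, Finset.coe_singleton, Set.mem_insert_iff,
        Set.mem_singleton_iff] at hz
      rcases hz with rfl | rfl
      · exact hxX
      · exact hyX
    · have heqI : (⋂ g ∈ ({x, y} : Finset G), g • B2) = x • B2 ∩ y • B2 := by
        simp
      rw [heqI]
      have heq : x • B2 ∩ y • B2 = x • (B2 ∩ (x⁻¹ * y) • B2) := by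
        rw [Set.smul_set_inter, smul_smul, mul_inv_cancel_left]
      rw [heq]
      apply Set.Finite.smul_set
      have hne2 : x⁻¹ * y ≠ 1 := fun h => hxy (by
        have := inv_mul_eq_one.mp h
        exact this)
      refine (hthin _ hne2).subset ?_
      rintro z ⟨h2, h1⟩
      exact ⟨Set.smul_set_mono hB2B h1, hB2B h2⟩
  have hJsp : J ⊆ {A : Set G | IsSparseSub A} := by
    rintro C ⟨Fs, hEfin0⟩
    intro X hX
    obtain ⟨F', hF'X, hcard⟩ := hX.exists_subset_card_eq (Fs.card + 1)
    refine ⟨F', hF'X, ?_⟩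
    set E := C \ U Fs with hEdef
    have hCsub : C ⊆ U Fs ∪ E := by
      intro x hx
      by_cases h : x ∈ U Fs
      · exact Or.inl h
      · exact Or.inr ⟨hx, h⟩
    have hKfin : (⋃ x ∈ F', ⋃ x' ∈ F', ⋃ g ∈ Fs,
        if x = x' then (∅ : Set G) else ((x * g) • B1 ∩ ((x' * g) • B1))).Finite := by
      refine Set.Finite.biUnion F'.finite_toSet fun x _ => ?_
      refine Set.Finite.biUnion F'.finite_toSet fun x' _ => ?_
      refine Set.Finite.biUnion Fs.finite_toSet fun g _ => ?_
      by_cases h : x = x'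
      · simp [h]
      · rw [if_neg h]
        have hne2 : (x * g)⁻¹ * (x' * g) ≠ 1 := by
          intro hcon
          exact h (mul_right_cancel (inv_mul_eq_one.mp hcon))
        have heq : (x * g) • B1 ∩ (x' * g) • B1
            = (x * g) • (B1 ∩ ((x * g)⁻¹ * (x' * g)) • B1) := by
          rw [Set.smul_set_inter, smul_smul, mul_inv_cancel_left]
        rw [heq]
        apply Set.Finite.smul_set
        refine (hthin _ hne2).subset ?_
        rintro z ⟨h1, h2⟩
        exact ⟨Set.smul_set_mono hB1B h2, hB1B h1⟩
    have hEfin : (⋃ x ∈ F', x • E).Finite :=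
      Set.Finite.biUnion F'.finite_toSet fun x _ => hEfin0.smul_set
    refine (hEfin.union hKfin).subset ?_
    intro y hy
    by_cases hyE : ∃ x ∈ F', y ∈ x • E
    · left
      obtain ⟨x, hx, h⟩ := hyE
      exact Set.mem_biUnion hx h
    · right
      push_neg at hyE
      have hco : ∀ x : G, ∃ g : G, x ∈ F' → g ∈ Fs ∧ y ∈ (x * g) • B1 := by
        intro x
        by_cases hxF : x ∈ F'
        · have hyC : y ∈ x • C := Set.mem_iInter₂.mp hy x hxF
          have hmem : x⁻¹ • y ∈ C := Set.mem_smul_set_iff_inv_smul_mem.mp hyC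
          rcases hCsub hmem with hU' | hE'
          · simp only [hU, Set.mem_iUnion] at hU'
            obtain ⟨g, hg, hmg⟩ := hU'
            refine ⟨g, fun _ => ⟨hg, ?_⟩⟩
            rw [mul_smul]
            exact Set.mem_smul_set_iff_inv_smul_mem.mpr hmg
          · exact absurd (Set.mem_smul_set_iff_inv_smul_mem.mpr hE') (hyE x hxF)
        · exact ⟨1, fun h => absurd h hxF⟩
      choose gf hgf using hco
      have hmaps : ∀ x ∈ F', gf x ∈ Fs := fun x hx => (hgf x hx).1
      obtain ⟨x, hxF, x', hx'F, hxx', hgeq⟩ :=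
        Finset.exists_ne_map_eq_of_card_lt_of_maps_to
          (by rw [hcard]; exact Nat.lt_succ_self _) hmaps
      refine Set.mem_biUnion hxF ?_
      refine Set.mem_biUnion hx'F ?_
      refine Set.mem_biUnion (hmaps x hxF) ?_
      rw [if_neg hxx']
      exact ⟨(hgf x hxF).2, by rw [hgeq]; exact (hgf x' hx'F).2⟩
  have hJSp : J ⊂ {A : Set G | IsSparseSub A} :=
    (Set.ssubset_iff_of_subset hJsp).mpr ⟨B2, hB2sparse, hB2J⟩
  exact ⟨J, hJideal, hJinv, hFJ, hJI, hJSp⟩
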